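/- Let q be a prime power and k ≥ 3. Define polynomials P_1(X) = 1, P_2(X) = 1, and P_i(X) = P_{i-1}(X) - X^{q^{i-3}}·P_{i-2}(X) for i ≥ 3. Then for every B ∈ F_{q^k}^×, the polynomial X^{q+1} - B·X + B splits completely over F_{q^k} if and only if P_k(1/B) = 0. -/

import Mathlib

open Polynomial

noncomputable def bluherP (q : ℕ) (R : Type*) [CommRing R] : ℕ → Polynomial R
  | 0 => 1
  | 1 => 1
  | 2 => 1
  | (n + 3) => bluherP q R (n + 2) - X ^ (q ^ n) * bluherP q R (n + 1)

namespace BluherAux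

variable {F : Type*} [Field F]

def blM (q : ℕ) (B : F) (j : ℕ) : Matrix (Fin 2) (Fin 2) F :=
  !![B ^ q ^ j, -(B ^ q ^ j); 1, 0]

noncomputable def blN (q : ℕ) (B : F) : ℕ → Matrix (Fin 2) (Fin 2) F
  | 0 => 1
  | (i+1) => blM q B i * blN q B i

def blE (q : ℕ) : ℕ → ℕ
  | 0 => 0
  | (i+1) => q * blE q i + 1

lemma blE_succ (q i : ℕ) : blE q (i+1) = blE q i + q ^ i := by
  induction i with
  | zero => simp [blE]
  | succ n ih =>
      have h1 : q * blE q n + 1 = blE q n + q ^ n := by rw [← ih]; rfl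
      calc blE q (n+2) = q * blE q (n+1) + 1 := rfl
        _ = q * (blE q n + q ^ n) + 1 := by rw [ih]
        _ = (q * blE q n + 1) + q * q ^ n := by ring
        _ = blE q (n+1) + q ^ (n+1) := by rw [h1, ← ih]; ring

noncomputable def blA (q : ℕ) (B : F) (i : ℕ) : F := blN q B i 0 0
noncomputable def blB (q : ℕ) (B : F) (i : ℕ) : F := blN q B i 0 1

lemma blN_row_one (q : ℕ) (B : F) (i : ℕ) (c : Fin 2) :
    blN q B (i+1) 1 c = blN q B i 0 c := by
  show (blM q B i * blN q B i) 1 c = _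
  rw [Matrix.mul_apply, Fin.sum_univ_two]
  simp [blM]

@[simp] lemma blA_zero (q : ℕ) (B : F) : blA q B 0 = 1 := by
  simp [blA, blN, Matrix.one_apply]

@[simp] lemma blB_zero (q : ℕ) (B : F) : blB q B 0 = 0 := by
  simp [blB, blN, Matrix.one_apply]

lemma blA_succ (q : ℕ) (B : F) (i : ℕ) :
    blA q B (i+1) = B ^ q ^ i * blA q B i - B ^ q ^ i * blN q B i 1 0 := by
  show (blM q B i * blN q B i) 0 0 = _
  rw [Matrix.mul_apply, Fin.sum_univ_two]
  simp [blM, blA]; ring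

lemma blB_succ (q : ℕ) (B : F) (i : ℕ) :
    blB q B (i+1) = B ^ q ^ i * blB q B i - B ^ q ^ i * blN q B i 1 1 := by
  show (blM q B i * blN q B i) 0 1 = _
  rw [Matrix.mul_apply, Fin.sum_univ_two]
  simp [blM, blB]; ring

@[simp] lemma blA_one (q : ℕ) (B : F) : blA q B 1 = B := by
  rw [blA_succ]; simp [blN, Matrix.one_apply]

@[simp] lemma blB_one (q : ℕ) (B : F) : blB q B 1 = -B := by
  rw [blB_succ]; simp [blN, Matrix.one_apply]

lemma blA_succ_succ (q : ℕ) (B : F) (i : ℕ) :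
    blA q B (i+2) = B ^ q ^ (i+1) * (blA q B (i+1) - blA q B i) := by
  rw [blA_succ, blN_row_one]; unfold blA; ring

lemma blB_succ_succ (q : ℕ) (B : F) (i : ℕ) :
    blB q B (i+2) = B ^ q ^ (i+1) * (blB q B (i+1) - blB q B i) := by
  rw [blB_succ, blN_row_one]; unfold blB; ring

lemma blN_det (q : ℕ) (B : F) (i : ℕ) : (blN q B i).det = B ^ blE q i := by
  induction i with
  | zero => simp [blN, blE]
  | succ n ih =>
      show (blM q B n * blN q B n).det = _
      rw [Matrix.det_mul, ih, blM, Matrix.det_fin_two_of, blE_succ]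
      ring

section twist

variable (p m : ℕ) [ExpChar F p]

lemma blM_map (q : ℕ) (B : F) (hq : q = p ^ m) (j : ℕ) :
    (blM q B j).map (iterateFrobenius F p m) = blM q B (j+1) := by
  have hq0 : q ≠ 0 := by rw [hq]; exact (expChar_pow_pos F p m).ne'
  have hneg : ∀ x : F, (-x : F) ^ q = -(x ^ q) := fun x => by
    rw [hq, ← zero_sub, sub_pow_expChar_pow, zero_pow (expChar_pow_pos F p m).ne', zero_sub]
  ext i c
  fin_cases i <;> fin_cases c <;>
    simp [blM, Matrix.map_apply, iterateFrobenius_def, ← hq, hneg,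
      zero_pow hq0, ← pow_mul, ← pow_succ]

lemma blN_twist (q : ℕ) (B : F) (hq : q = p ^ m) (i : ℕ) :
    (blN q B i).map (iterateFrobenius F p m) * blM q B 0 = blN q B (i+1) := by
  induction i with
  | zero =>
      show (1 : Matrix (Fin 2) (Fin 2) F).map _ * blM q B 0 = blM q B 0 * 1
      rw [mul_one]
      rw [show ((1 : Matrix (Fin 2) (Fin 2) F).map (iterateFrobenius F p m)) = 1 from
        (iterateFrobenius F p m).mapMatrix.map_one, one_mul]
  | succ n ih =>
      show ((blM q B n * blN q B n).map _) * blM q B 0 = blM q B (n+1) * blN q B (n+1)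
      rw [Matrix.map_mul, mul_assoc, ih, blM_map p m q B hq]

lemma blA_frob (q : ℕ) (B : F) (hq : q = p ^ m) (i : ℕ) :
    blA q B (i+1) = B * (blA q B i) ^ q + (blB q B i) ^ q := by
  have h := congrFun (congrFun (blN_twist p m q B hq i) 0) 0
  rw [Matrix.mul_apply, Fin.sum_univ_two] at h
  simp only [Matrix.map_apply, iterateFrobenius_def, blM, ← hq] at h
  simp only [Matrix.cons_val', Matrix.cons_val_zero, Matrix.empty_val',
    Matrix.cons_val_fin_one, Matrix.cons_val_one, Matrix.head_cons,
    Matrix.head_fin_const, Matrix.of_apply] at h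
  rw [blA, ← h, blA, blB, pow_zero, pow_one]
  ring

lemma blB_frob (q : ℕ) (B : F) (hq : q = p ^ m) (i : ℕ) :
    blB q B (i+1) = -(B * (blA q B i) ^ q) := by
  have h := congrFun (congrFun (blN_twist p m q B hq i) 0) 1
  rw [Matrix.mul_apply, Fin.sum_univ_two] at h
  simp only [Matrix.map_apply, iterateFrobenius_def, blM, ← hq] at h
  simp only [Matrix.cons_val', Matrix.cons_val_zero, Matrix.empty_val',
    Matrix.cons_val_fin_one, Matrix.cons_val_one, Matrix.head_cons,
    Matrix.head_fin_const, Matrix.of_apply] at h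
  rw [blB, ← h, blA, pow_zero, pow_one]
  ring

end twist

lemma blA_eq_P (q : ℕ) (B : F) (hB : B ≠ 0) (i : ℕ) :
    blA q B i = B ^ blE q i * (bluherP q F (i+1)).eval B⁻¹ := by
  induction i using Nat.twoStepInduction with
  | zero => simp [blE, bluherP]
  | one => simp [blE, bluherP]
  | more n ih1 ih2 =>
      rw [blA_succ_succ, ih1, ih2,
        show bluherP q F (n+3) = bluherP q F (n+2) - X ^ (q ^ n) * bluherP q F (n+1) from rfl]
      rw [eval_sub, eval_mul, eval_pow, eval_X]
      rw [blE_succ q (n+1), blE_succ q n, inv_pow]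
      field_simp
      ring

end BluherAux

namespace BluherAux

lemma blE_one (q : ℕ) : blE q 1 = 1 := by simp [blE]

lemma key {F L : Type*} [Field F] [Field L] (p m q : ℕ) [ExpChar F p] [ExpChar L p]
    (hq : q = p ^ m) (ι : F →+* L) (B : F) (x : L)
    (hx : x ^ (q + 1) = ι B * (x - 1)) (i : ℕ) :
    x ^ blE q (i+1) = ι (blA q B i) * x + ι (blB q B i) := by
  induction i with
  | zero => simp [blE_one]
  | succ n ih =>
      have e2 : blE q (n+2) = blE q (n+1) * q + 1 := by
        rw [show blE q (n+2) = q * blE q (n+1) + 1 from rfl]; ring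
      rw [e2, pow_add, pow_one, pow_mul, ih]
      calc (ι (blA q B n) * x + ι (blB q B n)) ^ q * x
          = ι (blA q B n ^ q) * x ^ (q+1) + ι (blB q B n ^ q) * x := by
            rw [hq, add_pow_expChar_pow, ← hq, mul_pow, map_pow, map_pow]; ring
        _ = ι (blA q B (n+1)) * x + ι (blB q B (n+1)) := by
            rw [hx, blA_frob p m q B hq, blB_frob p m q B hq]
            simp only [map_add, map_neg, map_mul, map_pow]
            ring

end BluherAux

open BluherAux in
theorem bluher_value_iff_Pk_root (p m q k : ℕ) (hp : p.Prime) (hm : 0 < m)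
    (hq : q = p ^ m) (hk : 3 ≤ k)
    (F : Type*) [Field F] [Fintype F] (hF : Fintype.card F = q ^ k)
    (B : F) (hB : B ≠ 0) :
    ((X ^ (q + 1) - C B * X + C B : Polynomial F).map (RingHom.id F)).Splits ↔
      (bluherP q F k).eval B⁻¹ = 0 := by
  classical
  rw [Polynomial.map_id]
  obtain ⟨j, rfl⟩ : ∃ j, k = j + 3 := ⟨k - 3, by omega⟩
  have hq2 : 2 ≤ q := by
    subst hq; calc 2 ≤ p := hp.two_le
      _ ≤ p ^ m := Nat.le_self_pow hm.ne' p
  -- characteristic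
  haveI hcp : CharP F p := by
    obtain ⟨n, hn, hcard⟩ := FiniteField.card F (ringChar F)
    have hdvd : ringChar F ∣ p ^ (m * (j + 3)) := by
      rw [pow_mul, ← hq, ← hF, hcard]
      exact dvd_pow_self _ n.pos.ne'
    have : ringChar F = p :=
      (Nat.prime_dvd_prime_iff_eq hn hp).mp (hn.dvd_of_dvd_pow hdvd)
    exact this ▸ ringChar.charP F
  haveI : Fact p.Prime := ⟨hp⟩
  have hBk : B ^ q ^ (j + 3) = B := by rw [← hF]; exact FiniteField.pow_card B
  set f : F[X] := X ^ (q + 1) - C B * X + C B with hf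
  have hq0 : q ≠ 0 := by omega
  have hfdeg : f.natDegree = q + 1 := by
    rw [hf]; compute_degree!
    simp [hq0]
  have hf0 : f ≠ 0 := fun h => by rw [h, natDegree_zero] at hfdeg; omega
  have hqF : ((q : ℕ) : F) = 0 := by
    rw [hq]; push_cast; rw [CharP.cast_eq_zero F p]; exact zero_pow hm.ne'
  have hder : derivative f = X ^ q - C B := by
    have h1 : ((q + 1 : ℕ) : F) = 1 := by push_cast [hqF]; ring
    rw [hf]
    rw [derivative_add, derivative_sub, derivative_X_pow, derivative_C,
      derivative_C_mul, derivative_X]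
    simp [h1]
  have hsep : f.Separable := by
    have hc : C (B⁻¹) * C B = (1 : F[X]) := by
      rw [← C_mul, inv_mul_cancel₀ hB, C_1]
    have : IsCoprime f (derivative f) := by
      refine ⟨C B⁻¹, -(C B⁻¹ * X), ?_⟩
      rw [hder, hf]
      linear_combination hc
    exact this
  have hrootF : ∀ s : F, f.eval s = 0 → s ^ (q + 1) = B * (s - 1) := by
    intro s hs
    rw [hf] at hs
    simp only [eval_add, eval_sub, eval_mul, eval_pow, eval_X, eval_C] at hs
    linear_combination hs
  have hPk : blA q B (j+2) = B ^ blE q (j+2) * (bluherP q F (j+3)).eval B⁻¹ :=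
    blA_eq_P q B hB (j+2)
  have hBE : (B : F) ^ blE q (j+2) ≠ 0 := pow_ne_zero _ hB
  have hcardroots := Polynomial.card_roots' f
  constructor
  · -- splits → P_k(1/B) = 0
    intro hsplit
    have hcard : Multiset.card f.roots = q + 1 := by
      rw [splits_iff_card_roots.mp hsplit, hfdeg]
    have hnd : f.roots.Nodup := nodup_roots hsep
    by_contra hne
    have hA : blA q B (j+2) ≠ 0 := by
      rw [hPk]; exact mul_ne_zero hBE hne
    set Q : F[X] := C (blA q B (j+2)) * X ^ 2 +
        C (blB q B (j+2) - blA q B (j+3)) * X - C (blB q B (j+3)) with hQ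
    have hQdeg : Q.natDegree ≤ 2 := by rw [hQ]; compute_degree
    have hQne : Q ≠ 0 := by
      intro h
      have h2 : Q.coeff 2 = 0 := by rw [h]; simp
      rw [hQ] at h2
      simp [coeff_add, coeff_sub, coeff_C_mul, coeff_X_pow, coeff_C] at h2
      exact hA h2
    have hsub : f.roots.toFinset ⊆ Q.roots.toFinset := by
      intro s hs
      rw [Multiset.mem_toFinset, mem_roots hf0] at hs
      rw [Multiset.mem_toFinset, mem_roots hQne]
      have hsr := hrootF s hs
      have k1 := key p m q hq (RingHom.id F) B s hsr (j+2)
      have k2 := key p m q hq (RingHom.id F) B s hsr (j+3)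
      simp only [RingHom.id_apply] at k1 k2
      have e4 : blE q (j+4) = blE q (j+3) + q ^ (j+3) := blE_succ q (j+3)
      have hsq : s ^ q ^ (j+3) = s := by rw [← hF]; exact FiniteField.pow_card s
      have hk2' : (blA q B (j+2) * s + blB q B (j+2)) * s
          = blA q B (j+3) * s + blB q B (j+3) := by
        rw [← k1, ← k2, show j + 3 + 1 = j + 4 from rfl, e4, pow_add, hsq]
      show Q.IsRoot s
      rw [hQ, IsRoot.def]
      simp only [eval_add, eval_sub, eval_mul, eval_pow, eval_X, eval_C]
      linear_combination hk2'
    have : q + 1 ≤ 2 := by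
      calc q + 1 = f.roots.toFinset.card := by
            rw [Multiset.toFinset_card_of_nodup hnd, hcard]
        _ ≤ Q.roots.toFinset.card := Finset.card_le_card hsub
        _ ≤ Multiset.card Q.roots := Multiset.toFinset_card_le _
        _ ≤ Q.natDegree := Polynomial.card_roots' Q
        _ ≤ 2 := hQdeg
    omega
  · -- P_k(1/B) = 0 → splits
    intro hP
    have hA : blA q B (j+2) = 0 := by rw [hPk, hP, mul_zero]
    have hBk0 : blB q B (j+3) = 0 := by
      rw [blB_frob p m q B hq (j+2), hA, zero_pow hq0, mul_zero, neg_zero]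
    -- twist at the top index
    have htw := blN_twist p m q B hq (j+3)
    have hMk : blM q B (j+3) = blM q B 0 := by
      unfold blM; rw [hBk, pow_zero, pow_one]
    rw [show blN q B (j+3+1) = blM q B (j+3) * blN q B (j+3) from rfl, hMk] at htw
    have h00 := congrFun (congrFun htw 0) 0
    have h01 := congrFun (congrFun htw 0) 1
    rw [Matrix.mul_apply, Fin.sum_univ_two, Matrix.mul_apply, Fin.sum_univ_two] at h00 h01
    simp only [Matrix.map_apply, iterateFrobenius_def, ← hq, blM,
      Matrix.cons_val', Matrix.cons_val_zero, Matrix.empty_val',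
      Matrix.cons_val_fin_one, Matrix.cons_val_one, Matrix.head_cons,
      Matrix.head_fin_const, Matrix.of_apply, pow_zero, pow_one] at h00 h01
    have hrow0 : blN q B (j+3) 1 0 = blA q B (j+2) := blN_row_one q B (j+2) 0
    have hrow1 : blN q B (j+3) 1 1 = blB q B (j+2) := blN_row_one q B (j+2) 1
    have hdefA : blN q B (j+3) 0 0 = blA q B (j+3) := rfl
    have hdefB : blN q B (j+3) 0 1 = blB q B (j+3) := rfl
    rw [hrow0, hA, hdefA, hdefB, hBk0, zero_pow hq0] at h00
    rw [hrow1, hdefA, hdefB, hBk0, zero_pow hq0] at h01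
    -- h00 : blA(j+3)^q * B + 0 * 1 = B * blA(j+3) + -B * 0
    -- h01 : blA(j+3)^q * -B + 0 * 0 = B * 0 + -B * blB(j+2)
    have hAq : blA q B (j+3) ^ q = blA q B (j+3) := by
      have h : blA q B (j+3) ^ q * B = blA q B (j+3) * B := by linear_combination h00
      exact mul_right_cancel₀ hB h
    have hBB : blB q B (j+2) = blA q B (j+3) := by
      have h : blB q B (j+2) * -B = blA q B (j+3) * -B := by
        rw [← hAq]; linear_combination - h01
      exact mul_right_cancel₀ (neg_ne_zero.mpr hB) h
    have hdet := blN_det q B (j+3)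
    rw [Matrix.det_fin_two, hdefA, hdefB, hrow0, hrow1, hBB, hA, hBk0] at hdet
    have hu : blA q B (j+3) ≠ 0 := by
      intro h
      rw [h] at hdet
      simp only [mul_zero, zero_mul, sub_zero, zero_sub, neg_zero] at hdet
      exact pow_ne_zero (blE q (j+3)) hB hdet.symm
    -- pass to the algebraic closure
    set L := AlgebraicClosure F with hL
    letI : CharP L p := charP_of_injective_ringHom (algebraMap F L).injective p
    set ι : F →+* L := algebraMap F L with hι
    set g : L[X] := f.map ι with hgdef
    have hg : g = X ^ (q + 1) - C (ι B) * X + C (ι B) := by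
      rw [hgdef, hf]
      simp [Polynomial.map_sub, Polynomial.map_add, Polynomial.map_mul,
        Polynomial.map_pow, Polynomial.map_X, Polynomial.map_C]
    have hgdeg : g.natDegree = q + 1 := by
      rw [hg]; compute_degree!
      simp [hq0]
    have hg0 : g ≠ 0 := fun h => by rw [h, natDegree_zero] at hgdeg; omega
    have hgsplit : g.Splits := IsAlgClosed.splits g
    have hgcard : Multiset.card g.roots = q + 1 := by
      rw [splits_iff_card_roots.mp hgsplit, hgdeg]
    have hgnd : g.roots.Nodup := nodup_roots (hsep.map)
    have hiuinj : Function.Injective ι := ι.injective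
    have hiu : ι (blA q B (j+3)) ≠ 0 := fun h => hu (hiuinj (by rw [h, map_zero]))
    have hsub : g.roots.toFinset ⊆ Finset.image (fun s : F => ι s) f.roots.toFinset := by
      intro x hx
      rw [Multiset.mem_toFinset, mem_roots hg0] at hx
      have hxr : x ^ (q + 1) = ι B * (x - 1) := by
        have hx0 : g.eval x = 0 := hx
        rw [hg] at hx0
        simp only [eval_add, eval_sub, eval_mul, eval_pow, eval_X, eval_C] at hx0
        linear_combination hx0
      have k1 := key p m q hq ι B x hxr (j+2)
      have k2 := key p m q hq ι B x hxr (j+3)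
      rw [hA, map_zero, zero_mul, zero_add] at k1
      rw [hBk0, map_zero, add_zero] at k2
      have e4 : blE q (j+3+1) = blE q (j+3) + q ^ (j+3) := blE_succ q (j+3)
      have hfix : x ^ q ^ (j+3) = x := by
        have h5 : ι (blA q B (j+3)) * x ^ q ^ (j+3) = ι (blA q B (j+3)) * x := by
          calc ι (blA q B (j+3)) * x ^ q ^ (j+3)
              = x ^ blE q (j+2+1) * x ^ q ^ (j+3) := by rw [← hBB, ← k1]
            _ = x ^ blE q (j+3+1) := by
                rw [show j+2+1 = j+3 from rfl, ← pow_add, ← e4]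
            _ = ι (blA q B (j+3)) * x := k2
        exact mul_left_cancel₀ hiu h5
      have hmem : ∃ s : F, ι s = x := by
        by_contra hno
        push_neg at hno
        set h : L[X] := X ^ q ^ (j+3) - X with hh
        have hQQ : 1 < q ^ (j+3) := by
          calc 1 < 2 := one_lt_two
            _ ≤ q := hq2
            _ ≤ q ^ (j+3) := Nat.le_self_pow (by omega) q
        have hhdeg : h.natDegree = q ^ (j+3) := by
          rw [hh]; compute_degree!
          · rw [if_neg (show ¬(1 : ℕ) = q ^ (j+3) from fun hcc => hQQ.ne' hcc.symm)]
            simp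
          · omega
        have hh0 : h ≠ 0 := fun hz => by rw [hz, natDegree_zero] at hhdeg; omega
        have hsubU : insert x (Finset.image (fun s : F => ι s) Finset.univ)
            ⊆ h.roots.toFinset := by
          intro y hy
          rw [Multiset.mem_toFinset, mem_roots hh0]
          rw [Finset.mem_insert] at hy
          have hyfix : y ^ q ^ (j+3) = y := by
            rcases hy with rfl | hy
            · exact hfix
            · obtain ⟨s, _, rfl⟩ := Finset.mem_image.mp hy
              rw [← map_pow, ← hF, FiniteField.pow_card]
          rw [hh, IsRoot.def]
          simp only [eval_sub, eval_pow, eval_X]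
          rw [hyfix, sub_self]
        have hcardU : q ^ (j+3) + 1 ≤ q ^ (j+3) := by
          calc q ^ (j+3) + 1
              = (insert x (Finset.image (fun s : F => ι s) Finset.univ)).card := by
                rw [Finset.card_insert_of_notMem (by
                  intro hxmem
                  obtain ⟨s, _, hs⟩ := Finset.mem_image.mp hxmem
                  exact hno s hs),
                  Finset.card_image_of_injective _ hiuinj, Finset.card_univ, hF]
            _ ≤ h.roots.toFinset.card := Finset.card_le_card hsubU
            _ ≤ Multiset.card h.roots := Multiset.toFinset_card_le _
            _ ≤ h.natDegree := Polynomial.card_roots' h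
            _ = q ^ (j+3) := hhdeg
        omega
      obtain ⟨s, rfl⟩ := hmem
      refine Finset.mem_image.mpr ⟨s, ?_, rfl⟩
      rw [Multiset.mem_toFinset, mem_roots hf0]
      have hev : ι (f.eval s) = 0 := by
        rw [← Polynomial.eval₂_at_apply, ← Polynomial.eval_map]
        exact hx
      exact hiuinj (by rw [hev, map_zero])
    have hge : q + 1 ≤ Multiset.card f.roots := by
      calc q + 1 = g.roots.toFinset.card := by
            rw [Multiset.toFinset_card_of_nodup hgnd, hgcard]
        _ ≤ (Finset.image (fun s : F => ι s) f.roots.toFinset).card :=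
            Finset.card_le_card hsub
        _ ≤ f.roots.toFinset.card := Finset.card_image_le
        _ ≤ Multiset.card f.roots := Multiset.toFinset_card_le _
    have hfin : Multiset.card f.roots = f.natDegree :=
      le_antisymm hcardroots (by rw [hfdeg]; exact hge)
    exact splits_iff_card_roots.mpr hfin
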